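/- Under the hypotheses of the previous statement with the sign-flipped PDE n_t = (nH)_x - nH - A·n along the flow (with A = H + ½(u-u_x)(v+v_x) replaced appropriately), one has n(t, q(t,x)) q_x(t,x) = n_0(x) · exp( -∫_0^t A(s, q(s,x)) ds ). Consequently, if m_0 and n_0 are both nonnegative (resp. nonpositive, resp. of a fixed sign), then m(t,·) and n(t,·) retain that sign for all t ∈ [0,T), since q_x > 0 and the exponential factor is positive. -/

import Mathlib

open MeasureTheory Set Topology Filter

/-- Continuity of the `y`-partial derivative of a `C¹` function of two variables. -/
lemma aux_partial_cont {F : ℝ → ℝ → ℝ} {Fx : ℝ → ℝ → ℝ}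
    (hF : ContDiff ℝ 1 fun p : ℝ × ℝ => F p.1 p.2)
    (hFx : ∀ t y : ℝ, HasDerivAt (fun y' => F t y') (Fx t y) y) :
    Continuous fun p : ℝ × ℝ => Fx p.1 p.2 := by
  have hd := hF.differentiable one_ne_zero
  have key : ∀ t y : ℝ, Fx t y =
      fderiv ℝ (fun p : ℝ × ℝ => F p.1 p.2) (t, y) (0, 1) := by
    intro t y
    have h1 : HasDerivAt (fun y' : ℝ => ((t, y') : ℝ × ℝ)) ((0 : ℝ), (1 : ℝ)) y :=
      (hasDerivAt_const y t).prodMk (hasDerivAt_id y)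
    have h2 := ((hd (t, y)).hasFDerivAt).comp_hasDerivAt y h1
    exact (hFx t y).unique h2
  have hc : Continuous fun p : ℝ × ℝ => fderiv ℝ (fun p : ℝ × ℝ => F p.1 p.2) p := by
    rw [contDiff_one_iff_fderiv] at hF
    exact hF.2
  have h3 : Continuous fun p : ℝ × ℝ =>
      fderiv ℝ (fun p : ℝ × ℝ => F p.1 p.2) p (0, 1) :=
    hc.clm_apply continuous_const
  convert h3 using 2 with p
  exact key p.1 p.2

/-- Key transport identity along the flow. -/
lemma aux_key (T : ℝ) (w H B Hx wt wHx : ℝ → ℝ → ℝ) (q : ℝ → ℝ → ℝ)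
    (hwC1 : ContDiff ℝ 1 fun p : ℝ × ℝ => w p.1 p.2)
    (hHC1 : ContDiff ℝ 1 fun p : ℝ × ℝ => H p.1 p.2)
    (hBC : Continuous fun p : ℝ × ℝ => B p.1 p.2)
    (hHx : ∀ t y : ℝ, HasDerivAt (fun y' => H t y') (Hx t y) y)
    (hwt : ∀ t y : ℝ, HasDerivAt (fun t' => w t' y) (wt t y) t)
    (hwHx : ∀ t y : ℝ, HasDerivAt (fun y' => w t y' * H t y') (wHx t y) y)
    (hPDE : ∀ t y : ℝ, wt t y - wHx t y = B t y * w t y)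
    (hq0 : ∀ x : ℝ, q 0 x = x)
    (hq : ∀ x : ℝ, ∀ t ∈ Ico (0 : ℝ) T,
      HasDerivAt (fun t' => q t' x) (-(H t (q t x))) t) :
    ∀ t ∈ Ico (0 : ℝ) T, ∀ x : ℝ,
      w t (q t x) * Real.exp (-∫ s in (0 : ℝ)..t, Hx s (q s x)) =
        w 0 x * Real.exp (∫ s in (0 : ℝ)..t, B s (q s x)) := by
  have hHxC : Continuous fun p : ℝ × ℝ => Hx p.1 p.2 := aux_partial_cont hHC1 hHx
  -- y-partial derivative of w
  set wx : ℝ → ℝ → ℝ := fun t y => fderiv ℝ (fun p : ℝ × ℝ => w p.1 p.2) (t, y) (0, 1)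
    with hwx_def
  have hwd := hwC1.differentiable one_ne_zero
  have hwx : ∀ t y : ℝ, HasDerivAt (fun y' => w t y') (wx t y) y := by
    intro t y
    have h1 : HasDerivAt (fun y' : ℝ => ((t, y') : ℝ × ℝ)) ((0 : ℝ), (1 : ℝ)) y :=
      (hasDerivAt_const y t).prodMk (hasDerivAt_id y)
    exact ((hwd (t, y)).hasFDerivAt).comp_hasDerivAt y h1
  have hwt' : ∀ t y : ℝ, wt t y =
      fderiv ℝ (fun p : ℝ × ℝ => w p.1 p.2) (t, y) (1, 0) := by
    intro t y
    have h1 : HasDerivAt (fun t' : ℝ => ((t', y) : ℝ × ℝ)) ((1 : ℝ), (0 : ℝ)) t :=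
      (hasDerivAt_id t).prodMk (hasDerivAt_const t y)
    have h2 := ((hwd (t, y)).hasFDerivAt).comp_hasDerivAt t h1
    exact (hwt t y).unique h2
  -- product rule identity
  have hprod : ∀ t y : ℝ, wHx t y = wx t y * H t y + w t y * Hx t y := by
    intro t y
    exact (hwHx t y).unique ((hwx t y).mul (hHx t y))
  intro t0 ht0 x
  obtain ⟨ht00, ht0T⟩ := ht0
  set qc : ℝ → ℝ := fun s => q s x with hqc_def
  set g : ℝ → ℝ := fun s => Hx s (qc s) with hg_def
  set a : ℝ → ℝ := fun s => B s (qc s) with ha_def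
  have hqc_cont : ContinuousOn qc (Ico 0 T) := fun s hs =>
    ((hq x s hs).continuousAt).continuousWithinAt
  have hpair : ∀ s ∈ Ico (0:ℝ) T, ContinuousWithinAt
      (fun s' => ((s', qc s') : ℝ × ℝ)) (Ico 0 T) s := fun s hs =>
    continuousWithinAt_id.prodMk (hqc_cont s hs)
  have hg_cont : ContinuousOn g (Ico 0 T) := fun s hs =>
    hHxC.continuousAt.comp_continuousWithinAt (hpair s hs)
  have ha_cont : ContinuousOn a (Ico 0 T) := fun s hs =>
    hBC.continuousAt.comp_continuousWithinAt (hpair s hs)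
  -- generic facts about primitives of functions continuous on `Ico 0 T`
  have hIccsub : Icc (0:ℝ) t0 ⊆ Ico 0 T := fun r hr => ⟨hr.1, lt_of_le_of_lt hr.2 ht0T⟩
  have primitive : ∀ (f : ℝ → ℝ), ContinuousOn f (Ico 0 T) →
      (∀ s ∈ Ico (0 : ℝ) t0, HasDerivWithinAt (fun u => ∫ r in (0:ℝ)..u, f r) (f s) (Ici s) s) ∧
      ContinuousOn (fun u => ∫ r in (0:ℝ)..u, f r) (Icc 0 t0) := by
    intro f hf
    constructor
    · intro s hs
      have hsT : s < T := lt_trans hs.2 ht0T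
      have hint : IntervalIntegrable f volume 0 s := by
        apply ContinuousOn.intervalIntegrable
        rw [uIcc_of_le hs.1]
        exact hf.mono fun r hr => ⟨hr.1, lt_of_le_of_lt hr.2 hsT⟩
      have hmem : Ico s T ∈ 𝓝[>] s := by
        apply mem_nhdsWithin.2
        exact ⟨Iio T, isOpen_Iio, hsT, fun r hr => ⟨le_of_lt hr.2, hr.1⟩⟩
      have hmeas : StronglyMeasurableAtFilter f (𝓝[>] s) :=
        ⟨Ico s T, hmem, ((hf.mono fun r hr => ⟨hs.1.trans hr.1, hr.2⟩).aestronglyMeasurable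
          measurableSet_Ico)⟩
      have hcw : ContinuousWithinAt f (Ioi s) s := by
        refine ContinuousWithinAt.mono_of_mem_nhdsWithin (hf s ⟨hs.1, hsT⟩) ?_
        apply mem_nhdsWithin.2
        exact ⟨Iio T, isOpen_Iio, hsT, fun r hr => ⟨hs.1.trans (le_of_lt hr.2), hr.1⟩⟩
      exact intervalIntegral.integral_hasDerivWithinAt_right hint hmeas hcw
    · have hIcc : IntegrableOn f (uIcc 0 t0) := by
        rw [uIcc_of_le ht00]
        exact (hf.mono hIccsub).integrableOn_Icc
      have := intervalIntegral.continuousOn_primitive_interval hIcc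
      rwa [uIcc_of_le ht00] at this
  obtain ⟨hgD, hgC⟩ := primitive g hg_cont
  obtain ⟨haD, haC⟩ := primitive a ha_cont
  -- the conserved quantity
  set Φ : ℝ → ℝ := fun u => w u (qc u) * Real.exp (-∫ r in (0:ℝ)..u, g r) *
      Real.exp (-∫ r in (0:ℝ)..u, a r) with hΦ_def
  have hΦcont : ContinuousOn Φ (Icc 0 t0) := by
    apply ContinuousOn.mul
    apply ContinuousOn.mul
    · intro s hs
      have h1 := (hwC1.continuous.continuousAt).comp_continuousWithinAt
        (hpair s (hIccsub hs))
      exact (h1.mono hIccsub : ContinuousWithinAt (fun s' => w s' (qc s')) (Icc 0 t0) s)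
    · exact (hgC.neg).rexp
    · exact (haC.neg).rexp
  have hΦderiv : ∀ s ∈ Ico (0:ℝ) t0, HasDerivWithinAt Φ 0 (Ici s) s := by
    intro s hs
    have hsICO : s ∈ Ico (0:ℝ) T := ⟨hs.1, lt_trans hs.2 ht0T⟩
    -- derivative of the composite w(s, qc s)
    have hγ : HasDerivAt (fun s' => ((s', qc s') : ℝ × ℝ))
        ((1 : ℝ), -(H s (qc s))) s := (hasDerivAt_id s).prodMk (hq x s hsICO)
    have hcomp : HasDerivAt (fun s' => w s' (qc s'))
        (wt s (qc s) + (-(H s (qc s))) * wx s (qc s)) s := by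
      have h2 := ((hwd (s, qc s)).hasFDerivAt).comp_hasDerivAt s hγ
      have h4 : (fderiv ℝ (fun p : ℝ × ℝ => w p.1 p.2) (s, qc s))
            ((1 : ℝ), -(H s (qc s))) =
          wt s (qc s) + (-(H s (qc s))) * wx s (qc s) := by
        have h3 : ((1 : ℝ), -(H s (qc s))) =
            ((1 : ℝ), (0 : ℝ)) + (-(H s (qc s))) • ((0 : ℝ), (1 : ℝ)) := by
          simp [Prod.ext_iff]
        rw [h3, ContinuousLinearMap.map_add, ContinuousLinearMap.map_smul,
          hwt' s (qc s), smul_eq_mul]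
      rw [← h4]
      exact h2
    have hE1 : HasDerivWithinAt (fun u => Real.exp (-∫ r in (0:ℝ)..u, g r))
        ((-(g s)) * Real.exp (-∫ r in (0:ℝ)..s, g r)) (Ici s) s := by
      have := ((hgD s hs).neg).exp
      simpa [mul_comm] using this
    have hE2 : HasDerivWithinAt (fun u => Real.exp (-∫ r in (0:ℝ)..u, a r))
        ((-(a s)) * Real.exp (-∫ r in (0:ℝ)..s, a r)) (Ici s) s := by
      have := ((haD s hs).neg).exp
      simpa [mul_comm] using this
    have hΦ' := ((hcomp.hasDerivWithinAt.mul hE1).mul hE2)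
    -- show the total derivative vanishes using the PDE
    have hpde : wt s (qc s) + (-(H s (qc s))) * wx s (qc s) =
        a s * w s (qc s) + g s * w s (qc s) := by
      have h1 := hPDE s (qc s)
      have h2 := hprod s (qc s)
      simp only [hg_def, ha_def]
      nlinarith [h1, h2]
    convert hΦ' using 1
    · rfl
    · rfl
    · rfl
    rw [hpde, Pi.mul_apply]
    ring
  have hconst := constant_of_has_deriv_right_zero hΦcont hΦderiv t0
    ⟨ht00, le_refl t0⟩
  have hΦ0 : Φ 0 = w 0 x := by
    simp only [hΦ_def, intervalIntegral.integral_same, neg_zero, Real.exp_zero, mul_one]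
    show w 0 (q 0 x) = w 0 x
    rw [hq0]
  rw [hΦ0] at hconst
  have hexp_ne : Real.exp (-∫ r in (0:ℝ)..t0, a r) ≠ 0 := Real.exp_ne_zero _
  have : w t0 (qc t0) * Real.exp (-∫ r in (0:ℝ)..t0, g r) =
      w 0 x * Real.exp (∫ r in (0:ℝ)..t0, a r) := by
    have h := hconst
    simp only [hΦ_def] at h
    field_simp [Real.exp_neg] at h ⊢
    have h2 : Real.exp (-∫ r in (0:ℝ)..t0, a r) * Real.exp (∫ r in (0:ℝ)..t0, a r) = 1 := by
      rw [← Real.exp_add, neg_add_cancel, Real.exp_zero]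
    rw [← h]
    linear_combination (-(w t0 (qc t0) * Real.exp (-∫ r in (0:ℝ)..t0, g r))) * h2
  exact this

theorem stmt_14 (T : ℝ) (hT : 0 < T) (m n H A Hx mt nt mHx nHx : ℝ → ℝ → ℝ)
    (q : ℝ → ℝ → ℝ)
    (hmC1 : ContDiff ℝ 1 fun p : ℝ × ℝ => m p.1 p.2)
    (hnC1 : ContDiff ℝ 1 fun p : ℝ × ℝ => n p.1 p.2)
    (hHC1 : ContDiff ℝ 1 fun p : ℝ × ℝ => H p.1 p.2)
    (hAC1 : ContDiff ℝ 1 fun p : ℝ × ℝ => A p.1 p.2)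
    (hHx : ∀ t y : ℝ, HasDerivAt (fun y' => H t y') (Hx t y) y)
    (hmt : ∀ t y : ℝ, HasDerivAt (fun t' => m t' y) (mt t y) t)
    (hnt : ∀ t y : ℝ, HasDerivAt (fun t' => n t' y) (nt t y) t)
    (hmHx : ∀ t y : ℝ, HasDerivAt (fun y' => m t y' * H t y') (mHx t y) y)
    (hnHx : ∀ t y : ℝ, HasDerivAt (fun y' => n t y' * H t y') (nHx t y) y)
    (hPDEm : ∀ t y : ℝ, mt t y - mHx t y = A t y * m t y)
    (hPDEn : ∀ t y : ℝ, nt t y - nHx t y = -(A t y * n t y))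
    (hq0 : ∀ x : ℝ, q 0 x = x)
    (hq : ∀ x : ℝ, ∀ t ∈ Ico (0 : ℝ) T,
      HasDerivAt (fun t' => q t' x) (-(H t (q t x))) t)
    (hqx : ∀ x : ℝ, ∀ t ∈ Ico (0 : ℝ) T,
      HasDerivAt (fun x' => q t x')
        (Real.exp (-∫ s in (0 : ℝ)..t, Hx s (q s x))) x)
    (hqsurj : ∀ t ∈ Ico (0 : ℝ) T, Function.Surjective (q t)) :
    (∀ t ∈ Ico (0 : ℝ) T, ∀ x : ℝ,
      n t (q t x) * Real.exp (-∫ s in (0 : ℝ)..t, Hx s (q s x)) =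
        n 0 x * Real.exp (-∫ s in (0 : ℝ)..t, A s (q s x))) ∧
    ((∀ x : ℝ, 0 ≤ m 0 x) → (∀ x : ℝ, 0 ≤ n 0 x) →
      ∀ t ∈ Ico (0 : ℝ) T, ∀ y : ℝ, 0 ≤ m t y ∧ 0 ≤ n t y) := by
  have hn_key := aux_key T n H (fun t y => -(A t y)) Hx nt nHx q hnC1 hHC1
    (by exact (hAC1.continuous).neg) hHx hnt hnHx
    (by intro t y; rw [hPDEn]; ring) hq0 hq
  have hm_key := aux_key T m H A Hx mt mHx q hmC1 hHC1
    hAC1.continuous hHx hmt hmHx hPDEm hq0 hq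
  have hneg : ∀ t x : ℝ, (∫ s in (0:ℝ)..t, -(A s (q s x))) =
      -∫ s in (0:ℝ)..t, A s (q s x) := by
    intro t x
    exact intervalIntegral.integral_neg
  have key_n : ∀ t ∈ Ico (0 : ℝ) T, ∀ x : ℝ,
      n t (q t x) * Real.exp (-∫ s in (0 : ℝ)..t, Hx s (q s x)) =
        n 0 x * Real.exp (-∫ s in (0 : ℝ)..t, A s (q s x)) := by
    intro t ht x
    have := hn_key t ht x
    rwa [hneg t x] at this
  refine ⟨key_n, ?_⟩
  intro hm0 hn0 t ht y
  obtain ⟨x, hxy⟩ := hqsurj t ht y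
  have hE1pos : 0 < Real.exp (-∫ s in (0 : ℝ)..t, Hx s (q s x)) := Real.exp_pos _
  constructor
  · have h := hm_key t ht x
    have hrhs : 0 ≤ m 0 x * Real.exp (∫ s in (0 : ℝ)..t, A s (q s x)) :=
      mul_nonneg (hm0 x) (Real.exp_pos _).le
    rw [← hxy]
    nlinarith [h, hE1pos, hrhs]
  · have h := key_n t ht x
    have hrhs : 0 ≤ n 0 x * Real.exp (-∫ s in (0 : ℝ)..t, A s (q s x)) :=
      mul_nonneg (hn0 x) (Real.exp_pos _).le
    rw [← hxy]
    nlinarith [h, hE1pos, hrhs]
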